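/- Let G be a decomposable (chordal) graph in which every minimal separator is a clique. Let S be a minimal separator of G, C a connected component of G \ S, and B = C ∪ S. If A, A' ⊆ B are minimally separated in G by a set S' (i.e., S' is a separator of A and A' in G of minimum cardinality), then S' ⊆ B. -/
import Mathlib

open scoped Classical

section Aux
variable {V : Type*} (G : SimpleGraph V) (S B : Set V)

/-- first vertex of a walk from outside B into B lies in S,
assuming edges from B \ S stay in B. -/
lemma first_entry (hclosed : ∀ u ∈ B, u ∉ S → ∀ v, G.Adj u v → v ∈ B) :
    ∀ {b a' : V} (q : G.Walk b a'), b ∉ B → a' ∈ B → ∃ x ∈ q.support, x ∈ S ∧ x ∈ B := by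
  intro b a' q
  induction q with
  | nil => intro hb ha'; exact absurd ha' hb
  | cons h q ih =>
    intro hb ha'
    rename_i u v w
    by_cases hv : v ∈ B
    · refine ⟨v, by simp, ?_, hv⟩
      by_contra hvS
      exact hb (hclosed v hv hvS u h.symm)
    · obtain ⟨x, hx, hxS⟩ := ih hv ha'
      exact ⟨x, by simp [hx], hxS⟩

lemma reroute (hclique : G.IsClique S) (hSB : S ⊆ B)
    (hclosed : ∀ u ∈ B, u ∉ S → ∀ v, G.Adj u v → v ∈ B) :
    ∀ (n : ℕ) {a a' : V} (p : G.Walk a a'), p.length ≤ n → a ∈ B → a' ∈ B →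
      ∃ p' : G.Walk a a', (∀ v ∈ p'.support, v ∈ p.support) ∧ ∀ v ∈ p'.support, v ∈ B := by
  intro n
  induction n with
  | zero =>
    intro a a' p hlen ha ha'
    cases p with
    | nil => exact ⟨SimpleGraph.Walk.nil, by simp, by simpa using ha⟩
    | cons h q => simp at hlen
  | succ n ih =>
    intro a a' p hlen ha ha'
    cases p with
    | nil => exact ⟨SimpleGraph.Walk.nil, by simp, by simpa using ha⟩
    | cons h q =>
      rename_i b
      simp only [SimpleGraph.Walk.length_cons, Nat.succ_le_succ_iff] at hlen
      by_cases hbB : b ∈ B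
      · obtain ⟨q', hq1, hq2⟩ := ih q hlen hbB ha'
        exact ⟨SimpleGraph.Walk.cons h q', by
          intro v hv
          simp only [SimpleGraph.Walk.support_cons, List.mem_cons] at hv ⊢
          rcases hv with rfl | hv
          · exact Or.inl rfl
          · exact Or.inr (hq1 v hv), by
          intro v hv
          simp only [SimpleGraph.Walk.support_cons, List.mem_cons] at hv
          rcases hv with rfl | hv
          · exact ha
          · exact hq2 v hv⟩
      · have haS : a ∈ S := by
          by_contra haS
          exact hbB (hclosed a ha haS b h)
        obtain ⟨x, hxq, hxS, hxB⟩ := first_entry G S B hclosed q hbB ha'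
        have hdl : (q.dropUntil x hxq).length ≤ n :=
          le_trans (SimpleGraph.Walk.length_dropUntil_le q hxq) hlen
        obtain ⟨r', hr1, hr2⟩ := ih (q.dropUntil x hxq) hdl hxB ha'
        have hsub : ∀ v ∈ r'.support, v ∈ q.support := fun v hv =>
          SimpleGraph.Walk.support_dropUntil_subset q hxq (hr1 v hv)
        by_cases hax : a = x
        · subst hax
          exact ⟨r', fun v hv => by
            simp only [SimpleGraph.Walk.support_cons, List.mem_cons]
            exact Or.inr (hsub v hv), hr2⟩
        · refine ⟨SimpleGraph.Walk.cons (hclique haS hxS hax) r', ?_, ?_⟩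
          · intro v hv
            simp only [SimpleGraph.Walk.support_cons, List.mem_cons] at hv ⊢
            rcases hv with rfl | hv
            · exact Or.inl rfl
            · exact Or.inr (hsub v hv)
          · intro v hv
            simp only [SimpleGraph.Walk.support_cons, List.mem_cons] at hv
            rcases hv with rfl | hv
            · exact ha
            · exact hr2 v hv

end Aux

/-- The set of connected components of `G` with the vertices of `S` removed,
viewed as subsets of the ambient vertex set. -/
def compsOf {V : Type*} (G : SimpleGraph V) (S : Set V) : Set (Set V) :=
  {C | ∃ c : (G.induce Sᶜ).ConnectedComponent,
    C = Subtype.val '' {u : ↥Sᶜ | (G.induce Sᶜ).connectedComponentMk u = c}}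

/-- `S` separates `A` and `A'` in `G`: every walk from a vertex of `A` to a
vertex of `A'` meets `S`. -/
def Separates {V : Type*} (G : SimpleGraph V) (S A A' : Set V) : Prop :=
  ∀ a ∈ A, ∀ a' ∈ A', ∀ p : G.Walk a a', ∃ s ∈ p.support, s ∈ S

/-- Dirac-type lemma: if the (minimal) separator `S` between the component `C`
and the rest of the graph is a clique (as for decomposable graphs), `B = C ∪ S`,
and `S'` is a minimum-cardinality separator in `G` of `A, A' ⊆ B`, then
`S' ⊆ B`. -/
theorem stmt8 {V : Type*} [Fintype V] (G : SimpleGraph V)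
    (S : Set V) (hclique : G.IsClique S)
    (C B : Set V) (hC : C ∈ compsOf G S) (hB : B = C ∪ S)
    (A A' : Set V) (hA : A ⊆ B) (hA' : A' ⊆ B)
    (S' : Set V) (hsep : Separates G S' A A')
    (hmin : ∀ T : Set V, Separates G T A A' → S'.ncard ≤ T.ncard) :
    S' ⊆ B := by
  obtain ⟨c, hc⟩ := hC
  have hSB : S ⊆ B := hB ▸ Set.subset_union_right
  have hclosed : ∀ u ∈ B, u ∉ S → ∀ v, G.Adj u v → v ∈ B := by
    intro u huB huS v huv
    have huC : u ∈ C := by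
      rw [hB] at huB; rcases huB with h | h
      · exact h
      · exact absurd h huS
    by_cases hvS : v ∈ S
    · exact hSB hvS
    · rw [hB]; left
      rw [hc] at huC ⊢
      obtain ⟨u₀, hu₀, rfl⟩ := huC
      refine ⟨⟨v, hvS⟩, ?_, rfl⟩
      have hadj : (G.induce Sᶜ).Adj ⟨v, hvS⟩ u₀ := by
        simp only [SimpleGraph.comap_adj, Function.Embedding.coe_subtype]
        exact huv.symm
      simp only [Set.mem_setOf_eq] at hu₀ ⊢
      rw [SimpleGraph.ConnectedComponent.connectedComponentMk_eq_of_adj hadj, hu₀]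
  set T := S' ∩ B with hT
  have hTsep : Separates G T A A' := by
    intro a ha a' ha' p
    obtain ⟨p', hp1, hp2⟩ := reroute G S B hclique hSB hclosed p.length p le_rfl (hA ha) (hA' ha')
    obtain ⟨s, hs, hsS'⟩ := hsep a ha a' ha' p'
    exact ⟨s, hp1 s hs, hsS', hp2 s hs⟩
  have hle : S'.ncard ≤ T.ncard := hmin T hTsep
  have : T = S' := Set.eq_of_subset_of_ncard_le Set.inter_subset_left hle (Set.toFinite S')
  rw [← this]
  exact Set.inter_subset_right
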